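/- Every tree T has a vertex-labeling by gap using labels from {1, 2}. Specifically, fixing any root v and setting f(u) = 1 if dist(u,v) ≡ 0 (mod 4) and f(u) = 2 otherwise, yields a vertex-labeling by gap. -/

import Mathlib

/-- The induced color of the vertex `v` under a vertex-labeling `f`:
`1` if `v` is isolated, the label of the unique neighbor if `deg v = 1`,
and `max_{u ~ v} f u − min_{u ~ v} f u` otherwise. -/
noncomputable def gapVertexColor {V : Type*} [Fintype V]
    (G : SimpleGraph V) (f : V → ℕ) (v : V) : ℕ :=
  letI := Classical.decRel G.Adj
  if G.degree v = 0 then 1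
  else if G.degree v = 1 then (G.neighborFinset v).sup f
  else (G.neighborFinset v).sup f - sInf (f '' G.neighborSet v)

section color

variable {V : Type*} [Fintype V] {T : SimpleGraph V} [DecidableRel T.Adj] {f : V → ℕ} {x : V}

lemma gap_eq (f : V → ℕ) (x : V) : gapVertexColor T f x =
    if T.degree x = 0 then 1
    else if T.degree x = 1 then (T.neighborFinset x).sup f
    else (T.neighborFinset x).sup f - sInf (f '' T.neighborSet x) := by
  unfold gapVertexColor
  congr!

lemma color_unique_nbr {u : V} (h : T.Adj x u) (huniq : ∀ z, T.Adj x z → z = u) :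
    gapVertexColor T f x = f u := by
  have hN : T.neighborFinset x = {u} := by
    ext z
    simp only [SimpleGraph.mem_neighborFinset, Finset.mem_singleton]
    exact ⟨fun hz => huniq z hz, fun hz => hz ▸ h⟩
  have hdeg : T.degree x = 1 := by
    rw [← SimpleGraph.card_neighborFinset_eq_degree, hN, Finset.card_singleton]
  rw [gap_eq]
  simp [hdeg, hN]

lemma color_all_eq {c : ℕ} (h2 : 2 ≤ T.degree x) (hall : ∀ u, T.Adj x u → f u = c) :
    gapVertexColor T f x = 0 := by
  rw [gap_eq]
  rw [if_neg (by omega), if_neg (by omega)]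
  apply Nat.sub_eq_zero_of_le
  have hsup : (T.neighborFinset x).sup f ≤ c :=
    Finset.sup_le fun u hu => (hall u ((SimpleGraph.mem_neighborFinset _ _ _).mp hu)).le
  have hne : (f '' T.neighborSet x).Nonempty := by
    have : 0 < T.degree x := by omega
    obtain ⟨u, hu⟩ := (SimpleGraph.degree_pos_iff_exists_adj _ _).mp this
    exact ⟨f u, u, hu, rfl⟩
  have hinf : c ≤ sInf (f '' T.neighborSet x) := by
    apply le_csInf hne
    rintro b ⟨u, hu, rfl⟩
    exact (hall u hu).ge
  omega

lemma color_mixed {a b : V} (h2 : 2 ≤ T.degree x) (ha : T.Adj x a) (hfa : f a = 1)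
    (hb : T.Adj x b) (hfb : f b = 2) (hbd : ∀ u, T.Adj x u → 1 ≤ f u ∧ f u ≤ 2) :
    gapVertexColor T f x = 1 := by
  rw [gap_eq]
  rw [if_neg (by omega), if_neg (by omega)]
  have hsup : (T.neighborFinset x).sup f = 2 := by
    refine le_antisymm (Finset.sup_le fun u hu =>
      (hbd u ((SimpleGraph.mem_neighborFinset _ _ _).mp hu)).2) ?_
    calc 2 = f b := hfb.symm
    _ ≤ _ := Finset.le_sup ((SimpleGraph.mem_neighborFinset _ _ _).mpr hb)
  have hinf : sInf (f '' T.neighborSet x) = 1 := by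
    refine le_antisymm (Nat.sInf_le ⟨a, ha, hfa⟩) ?_
    have hne : (f '' T.neighborSet x).Nonempty := ⟨f a, a, ha, rfl⟩
    apply le_csInf hne
    rintro c ⟨u, hu, rfl⟩
    exact (hbd u hu).1
  omega

end color


open SimpleGraph Finset

section helpers

variable {V : Type*} {T : SimpleGraph V}

lemma path_length_eq_dist (hacyc : T.IsAcyclic) (hconn : T.Connected)
    {a b : V} (p : T.Walk a b) (hp : p.IsPath) : p.length = T.dist a b := by
  obtain ⟨q, hq, hql⟩ := hconn.exists_path_of_dist a b
  have h := hacyc.path_unique ⟨p, hp⟩ ⟨q, hq⟩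
  rw [← hql]
  exact congrArg SimpleGraph.Walk.length (congrArg Subtype.val h)

lemma adj_dist_cases (hacyc : T.IsAcyclic) (hconn : T.Connected) {x y v : V}
    (h : T.Adj x y) : T.dist x v = T.dist y v + 1 ∨ T.dist y v = T.dist x v + 1 := by
  haveI := Classical.decEq V
  obtain ⟨p, hp, hpl⟩ := hconn.exists_path_of_dist y v
  by_cases hx : x ∈ p.support
  · right
    have hspec := p.take_spec hx
    have hlen : (p.takeUntil x hx).length + (p.dropUntil x hx).length = p.length := by
      conv_rhs => rw [← hspec]
      rw [SimpleGraph.Walk.length_append]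
    have h1 : (p.takeUntil x hx).length = T.dist y x :=
      path_length_eq_dist hacyc hconn _ (hp.takeUntil hx)
    have h2 : (p.dropUntil x hx).length = T.dist x v :=
      path_length_eq_dist hacyc hconn _ (hp.dropUntil hx)
    have h3 : T.dist y x = 1 := SimpleGraph.dist_eq_one_iff_adj.mpr h.symm
    omega
  · left
    have hq : (SimpleGraph.Walk.cons h p).IsPath := hp.cons hx
    have := path_length_eq_dist hacyc hconn _ hq
    simp only [SimpleGraph.Walk.length_cons] at this
    omega

lemma exists_parent (hacyc : T.IsAcyclic) (hconn : T.Connected) {x v : V}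
    (hx : T.dist x v ≠ 0) : ∃ p, T.Adj x p ∧ T.dist p v + 1 = T.dist x v := by
  obtain ⟨w, hw, hwl⟩ := hconn.exists_path_of_dist x v
  cases w with
  | nil => simp at hwl; simp [SimpleGraph.dist_self] at hx
  | cons h q =>
    refine ⟨_, h, ?_⟩
    have hq : q.IsPath := hw.of_cons
    have := path_length_eq_dist hacyc hconn q hq
    simp only [SimpleGraph.Walk.length_cons] at hwl
    omega

lemma parent_unique (hacyc : T.IsAcyclic) (hconn : T.Connected) {x v p1 p2 : V}
    (h1 : T.Adj x p1) (h2 : T.Adj x p2)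
    (d1 : T.dist p1 v + 1 = T.dist x v) (d2 : T.dist p2 v + 1 = T.dist x v) : p1 = p2 := by
  haveI := Classical.decEq V
  obtain ⟨w1, hw1, hl1⟩ := hconn.exists_path_of_dist p1 v
  obtain ⟨w2, hw2, hl2⟩ := hconn.exists_path_of_dist p2 v
  have hx1 : x ∉ w1.support := by
    intro hx
    have hle := SimpleGraph.Walk.length_dropUntil_le w1 hx
    have hd := SimpleGraph.dist_le (w1.dropUntil x hx)
    omega
  have hx2 : x ∉ w2.support := by
    intro hx
    have hle := SimpleGraph.Walk.length_dropUntil_le w2 hx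
    have hd := SimpleGraph.dist_le (w2.dropUntil x hx)
    omega
  have P1 : (SimpleGraph.Walk.cons h1 w1).IsPath := hw1.cons hx1
  have P2 : (SimpleGraph.Walk.cons h2 w2).IsPath := hw2.cons hx2
  have h := hacyc.path_unique ⟨SimpleGraph.Walk.cons h1 w1, P1⟩ ⟨SimpleGraph.Walk.cons h2 w2, P2⟩
  have hs := congrArg (fun q : T.Path x v => q.1.support) h
  simp only [SimpleGraph.Walk.support_cons] at hs
  have hs1 := w1.support_eq_cons
  have hs2 := w2.support_eq_cons
  rw [hs1, hs2] at hs
  exact (List.cons.injEq _ _ _ _).mp ((List.cons.injEq _ _ _ _).mp hs).2 |>.1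

end helpers

lemma key_step {V : Type*} [Fintype V] (T : SimpleGraph V) [DecidableRel T.Adj]
    (hconn : T.Connected) (hacyc : T.IsAcyclic) (v : V) {x y : V} (h : T.Adj x y)
    (hd : T.dist y v = T.dist x v + 1) :
    gapVertexColor T (fun u => if T.dist u v % 4 = 0 then 1 else 2) x ≠
    gapVertexColor T (fun u => if T.dist u v % 4 = 0 then 1 else 2) y := by
  set f : V → ℕ := fun u => if T.dist u v % 4 = 0 then 1 else 2 with hf
  have hfval : ∀ u, f u = if T.dist u v % 4 = 0 then 1 else 2 := fun u => rfl
  have hbd : ∀ u, 1 ≤ f u ∧ f u ≤ 2 := by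
    intro u; rw [hfval]; split <;> omega
  have huniq : ∀ z : V, T.degree z = 1 → ∀ a b, T.Adj z a → T.Adj z b → a = b := by
    intro z hz a b ha hb
    obtain ⟨c, hc⟩ := Finset.card_eq_one.mp (hz ▸ T.card_neighborFinset_eq_degree z)
    have ha' : a ∈ T.neighborFinset z := (SimpleGraph.mem_neighborFinset _ _ _).mpr ha
    have hb' : b ∈ T.neighborFinset z := (SimpleGraph.mem_neighborFinset _ _ _).mpr hb
    rw [hc, Finset.mem_singleton] at ha' hb'
    rw [ha', hb']
  have hsecond : ∀ z p : V, 2 ≤ T.degree z → T.Adj z p → ∃ w, T.Adj z w ∧ w ≠ p := by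
    intro z p hz _
    have hcard : 1 < (T.neighborFinset z).card := by
      rw [T.card_neighborFinset_eq_degree]; omega
    obtain ⟨w, hw, hwp⟩ := Finset.exists_mem_ne hcard p
    exact ⟨w, (SimpleGraph.mem_neighborFinset _ _ _).mp hw, hwp⟩
  have hdegx : 0 < T.degree x := (SimpleGraph.degree_pos_iff_exists_adj _ _).mpr ⟨y, h⟩
  have hdegy : 0 < T.degree y := (SimpleGraph.degree_pos_iff_exists_adj _ _).mpr ⟨x, h.symm⟩
  by_cases hx1 : T.degree x = 1
  · -- x is a leaf; then x must be the root v
    have hd0 : T.dist x v = 0 := by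
      by_contra hd0
      obtain ⟨p, hp, hpd⟩ := exists_parent hacyc hconn hd0
      have := huniq x hx1 p y hp h
      rw [this] at hpd
      omega
    have hxv : x = v := hconn.dist_eq_zero_iff.mp hd0
    have hcx : gapVertexColor T f x = 2 := by
      rw [color_unique_nbr h (fun z hz => huniq x hx1 z y hz h), hfval]
      rw [if_neg (by omega)]
    have hfx : f x = 1 := by rw [hfval, if_pos (by omega)]
    have hcy : gapVertexColor T f y = 1 := by
      by_cases hy1 : T.degree y = 1
      · rw [color_unique_nbr h.symm (fun z hz => huniq y hy1 z x hz h.symm), hfx]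
      · have hy2 : 2 ≤ T.degree y := by omega
        obtain ⟨z, hzadj, hzx⟩ := hsecond y x hy2 h.symm
        have hzd : T.dist z v = 2 := by
          rcases adj_dist_cases hacyc hconn (v := v) hzadj with h' | h'
          · exfalso
            have hz0 : z = v := hconn.dist_eq_zero_iff.mp (by omega)
            exact hzx (hz0.trans hxv.symm)
          · omega
        refine color_mixed hy2 h.symm hfx hzadj ?_ (fun u _ => hbd u)
        rw [hfval, if_neg (by omega)]
    omega
  · have hx2 : 2 ≤ T.degree x := by omega
    by_cases hpar : T.dist x v % 2 = 0
    · -- x at even distance, degree ≥ 2 : color 0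
      have hcx : gapVertexColor T f x = 0 := by
        refine color_all_eq (c := 2) hx2 ?_
        intro u hu
        rcases adj_dist_cases hacyc hconn (v := v) hu with h' | h' <;>
          · rw [hfval, if_neg (by omega)]
      rw [hcx]
      by_cases hy1 : T.degree y = 1
      · rw [color_unique_nbr h.symm (fun z hz => huniq y hy1 z x hz h.symm)]
        have := hbd x
        omega
      · have hy2 : 2 ≤ T.degree y := by omega
        obtain ⟨p, hp, hpd⟩ := exists_parent hacyc hconn (show T.dist y v ≠ 0 by omega)
        obtain ⟨z, hzadj, hzp⟩ := hsecond y p hy2 hp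
        have hzd : T.dist z v = T.dist y v + 1 := by
          rcases adj_dist_cases hacyc hconn (v := v) hzadj with h' | h'
          · exact absurd (parent_unique hacyc hconn hzadj hp (by omega) hpd) hzp
          · exact h'
        have hcy : gapVertexColor T f y = 1 := by
          by_cases hd4 : T.dist x v % 4 = 0
          · refine color_mixed hy2 hp ?_ hzadj ?_ (fun u _ => hbd u)
            · rw [hfval, if_pos (by omega)]
            · rw [hfval, if_neg (by omega)]
          · refine color_mixed hy2 hzadj ?_ hp ?_ (fun u _ => hbd u)
            · rw [hfval, if_pos (by omega)]
            · rw [hfval, if_neg (by omega)]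
        omega
    · -- x at odd distance, degree ≥ 2 : color 1
      obtain ⟨p, hp, hpd⟩ := exists_parent hacyc hconn (show T.dist x v ≠ 0 by omega)
      obtain ⟨z, hzadj, hzp⟩ := hsecond x p hx2 hp
      have hzd : T.dist z v = T.dist x v + 1 := by
        rcases adj_dist_cases hacyc hconn (v := v) hzadj with h' | h'
        · exact absurd (parent_unique hacyc hconn hzadj hp (by omega) hpd) hzp
        · exact h'
      have hcx : gapVertexColor T f x = 1 := by
        by_cases hd4 : T.dist x v % 4 = 1
        · refine color_mixed hx2 hp ?_ hzadj ?_ (fun u _ => hbd u)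
          · rw [hfval, if_pos (by omega)]
          · rw [hfval, if_neg (by omega)]
        · refine color_mixed hx2 hzadj ?_ hp ?_ (fun u _ => hbd u)
          · rw [hfval, if_pos (by omega)]
          · rw [hfval, if_neg (by omega)]
      rw [hcx]
      by_cases hy1 : T.degree y = 1
      · rw [color_unique_nbr h.symm (fun z hz => huniq y hy1 z x hz h.symm)]
        rw [hfval, if_neg (by omega)]
        omega
      · have hy2 : 2 ≤ T.degree y := by omega
        have hcy : gapVertexColor T f y = 0 := by
          refine color_all_eq (c := 2) hy2 ?_
          intro u hu
          rcases adj_dist_cases hacyc hconn (v := v) hu with h' | h' <;>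
            · rw [hfval, if_neg (by omega)]
        omega

theorem tree_vertex_labeling_by_gap
    {V : Type*} [Fintype V] (T : SimpleGraph V) [DecidableRel T.Adj]
    (hconn : T.Connected) (hacyc : T.IsAcyclic) (v : V) :
    ∀ x y, T.Adj x y →
      gapVertexColor T (fun u => if T.dist u v % 4 = 0 then 1 else 2) x ≠
      gapVertexColor T (fun u => if T.dist u v % 4 = 0 then 1 else 2) y := by
  intro x y h
  rcases adj_dist_cases hacyc hconn (v := v) h with h' | h'
  · exact (key_step T hconn hacyc v h.symm h').symm
  · exact key_step T hconn hacyc v h h'
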